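/- For a > 1, m, n ∈ ℕ₊, and x, y ≥ 0, the first central moment of the bivariate Szász-Mirakjan type operator satisfies Ŷ_{m,n,a}((t − x); x, y) = −x (m a^{1/m} − log a − m) / (m (a^{1/m} − 1)). -/

import Mathlib

open Real Filter

/-- One-dimensional Szász–Mirakjan type kernel. -/
noncomputable def szKernel (a : ℝ) (m : ℕ) (x : ℝ) (k : ℕ) : ℝ :=
  a ^ (-x / (a ^ ((m : ℝ)⁻¹) - 1)) * (x * Real.log a) ^ k /
    ((a ^ ((m : ℝ)⁻¹) - 1) ^ k * (k.factorial : ℝ))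

/-- Bivariate Szász–Mirakjan type operator. -/
noncomputable def szBiv (a : ℝ) (m n : ℕ) (f : ℝ → ℝ → ℝ) (x y : ℝ) : ℝ :=
  ∑' k₁ : ℕ, ∑' k₂ : ℕ,
    szKernel a m x k₁ * szKernel a n y k₂ * f ((k₁ : ℝ) / m) ((k₂ : ℝ) / n)

/-- Associated GBS (Generalized Boolean Sum) operator. -/
noncomputable def szGBS (a : ℝ) (m n : ℕ) (f : ℝ → ℝ → ℝ) (x y : ℝ) : ℝ :=
  ∑' k₁ : ℕ, ∑' k₂ : ℕ,
    szKernel a m x k₁ * szKernel a n y k₂ *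
      (f x ((k₂ : ℝ) / n) + f ((k₁ : ℝ) / m) y - f ((k₁ : ℝ) / m) ((k₂ : ℝ) / n))

lemma tsum_pow_div_fact (c : ℝ) : ∑' k : ℕ, c ^ k / (k.factorial : ℝ) = Real.exp c := by
  rw [Real.exp_eq_exp_ℝ, NormedSpace.exp_eq_tsum_div]

lemma summable_nat_mul_pow_div_fact (c : ℝ) :
    Summable (fun k : ℕ => (k : ℝ) * c ^ k / (k.factorial : ℝ)) := by
  rw [← summable_nat_add_iff 1]
  have : (fun k : ℕ => ((k + 1 : ℕ) : ℝ) * c ^ (k + 1) / ((k + 1).factorial : ℝ))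
      = fun k : ℕ => c * (c ^ k / (k.factorial : ℝ)) := by
    funext k
    have hk : ((k.factorial : ℝ)) ≠ 0 := Nat.cast_ne_zero.2 k.factorial_ne_zero
    rw [Nat.factorial_succ]
    push_cast
    field_simp
    ring
  rw [this]
  exact (Real.summable_pow_div_factorial c).mul_left c

lemma tsum_nat_mul_pow_div_fact (c : ℝ) :
    ∑' k : ℕ, (k : ℝ) * c ^ k / (k.factorial : ℝ) = c * Real.exp c := by
  rw [Summable.tsum_eq_zero_add (summable_nat_mul_pow_div_fact c)]
  have : (fun k : ℕ => ((k + 1 : ℕ) : ℝ) * c ^ (k + 1) / ((k + 1).factorial : ℝ))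
      = fun k : ℕ => c * (c ^ k / (k.factorial : ℝ)) := by
    funext k
    have hk : ((k.factorial : ℝ)) ≠ 0 := Nat.cast_ne_zero.2 k.factorial_ne_zero
    rw [Nat.factorial_succ]
    push_cast
    field_simp
    ring
  simp only [this]
  rw [tsum_mul_left, tsum_pow_div_fact]
  simp

lemma szKernel_eq (a : ℝ) (ha : 1 < a) (m : ℕ) (hm : 0 < m) (x : ℝ) (k : ℕ) :
    szKernel a m x k =
      Real.exp (-(x * Real.log a / (a ^ ((m : ℝ)⁻¹) - 1))) *
        ((x * Real.log a / (a ^ ((m : ℝ)⁻¹) - 1)) ^ k / (k.factorial : ℝ)) := by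
  have ha0 : 0 < a := lt_trans one_pos ha
  have hq : 0 < a ^ ((m : ℝ)⁻¹) - 1 := by
    have : 1 < a ^ ((m : ℝ)⁻¹) :=
      Real.one_lt_rpow_iff_of_pos ha0 |>.2 (Or.inl ⟨ha, by positivity⟩)
    linarith
  have hrpow : a ^ (-x / (a ^ ((m : ℝ)⁻¹) - 1)) =
      Real.exp (-(x * Real.log a / (a ^ ((m : ℝ)⁻¹) - 1))) := by
    rw [Real.rpow_def_of_pos ha0]
    ring_nf
  rw [szKernel, hrpow, div_pow]
  field_simp

lemma tsum_szKernel (a : ℝ) (ha : 1 < a) (m : ℕ) (hm : 0 < m) (x : ℝ) :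
    ∑' k : ℕ, szKernel a m x k = 1 := by
  simp only [szKernel_eq a ha m hm x]
  rw [tsum_mul_left, tsum_pow_div_fact, ← Real.exp_add]
  simp

lemma summable_szKernel (a : ℝ) (ha : 1 < a) (m : ℕ) (hm : 0 < m) (x : ℝ) :
    Summable (fun k : ℕ => szKernel a m x k) := by
  simp only [szKernel_eq a ha m hm x]
  exact (Real.summable_pow_div_factorial _).mul_left _

theorem stmt_3 (a : ℝ) (ha : 1 < a) (m n : ℕ) (hm : 0 < m) (hn : 0 < n)
    (x y : ℝ) (hx : 0 ≤ x) (hy : 0 ≤ y) :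
    szBiv a m n (fun t _ => t - x) x y =
      -(x * (m * a ^ ((m : ℝ)⁻¹) - Real.log a - m)) /
        (m * (a ^ ((m : ℝ)⁻¹) - 1)) := by
  have ha0 : 0 < a := lt_trans one_pos ha
  have hq : 0 < a ^ ((m : ℝ)⁻¹) - 1 := by
    have : 1 < a ^ ((m : ℝ)⁻¹) :=
      Real.one_lt_rpow_iff_of_pos ha0 |>.2 (Or.inl ⟨ha, by positivity⟩)
    linarith
  set c : ℝ := x * Real.log a / (a ^ ((m : ℝ)⁻¹) - 1) with hc
  -- inner sums collapse
  have hinner : ∀ k₁ : ℕ,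
      (∑' k₂ : ℕ, szKernel a m x k₁ * szKernel a n y k₂ * ((k₁ : ℝ) / m - x))
        = szKernel a m x k₁ * ((k₁ : ℝ) / m - x) := by
    intro k₁
    have : (fun k₂ : ℕ => szKernel a m x k₁ * szKernel a n y k₂ * ((k₁ : ℝ) / m - x))
        = fun k₂ : ℕ => (szKernel a m x k₁ * ((k₁ : ℝ) / m - x)) * szKernel a n y k₂ := by
      funext k₂; ring
    rw [this, tsum_mul_left, tsum_szKernel a ha n hn y, mul_one]
  rw [szBiv]
  simp only [hinner]
  have hterm : ∀ k₁ : ℕ, szKernel a m x k₁ * ((k₁ : ℝ) / m - x)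
      = (Real.exp (-c) / m) * ((k₁ : ℝ) * c ^ k₁ / (k₁.factorial : ℝ))
        - (Real.exp (-c) * x) * (c ^ k₁ / (k₁.factorial : ℝ)) := by
    intro k₁
    rw [szKernel_eq a ha m hm x k₁, ← hc]
    have hmm : (m : ℝ) ≠ 0 := Nat.cast_ne_zero.2 hm.ne'
    field_simp
  simp only [hterm]
  rw [Summable.tsum_sub (((summable_nat_mul_pow_div_fact c).mul_left _))
      ((Real.summable_pow_div_factorial c).mul_left _),
    tsum_mul_left, tsum_mul_left, tsum_nat_mul_pow_div_fact, tsum_pow_div_fact]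
  have hmm : (m : ℝ) ≠ 0 := Nat.cast_ne_zero.2 hm.ne'
  have hne : a ^ ((m : ℝ)⁻¹) - 1 ≠ 0 := hq.ne'
  have hexp : Real.exp (-c) * Real.exp c = 1 := by rw [← Real.exp_add]; simp
  have key : Real.exp (-c) / m * (c * Real.exp c) - Real.exp (-c) * x * Real.exp c
      = c / m - x := by
    calc Real.exp (-c) / m * (c * Real.exp c) - Real.exp (-c) * x * Real.exp c
        = (Real.exp (-c) * Real.exp c) * (c / m) - (Real.exp (-c) * Real.exp c) * x := by ring
      _ = c / m - x := by rw [hexp]; ring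
  rw [key, hc, div_div, eq_div_iff (mul_ne_zero hmm hne)]
  have hcancel : x * Real.log a / ((a ^ ((m : ℝ)⁻¹) - 1) * m) *
      ((m : ℝ) * (a ^ ((m : ℝ)⁻¹) - 1)) = x * Real.log a := by
    rw [mul_comm ((m : ℝ)) (a ^ ((m : ℝ)⁻¹) - 1), div_mul_cancel₀]
    exact mul_ne_zero hne hmm
  rw [sub_mul, hcancel]
  ring
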